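/- For fixed a ≥ 0, the function f(ε) := 3(3ε^2 + aε)/(ε − 10) on (10, ∞) attains its minimum at ε* = 10 + (1/6)√(3600 + 120a), and the minimum value equals f(ε*) = 3(√(30 + a) + √30)^2. -/
import Mathlib


/-- For fixed `a ≥ 0`, the function `f ε := 3(3ε² + aε)/(ε − 10)` on `(10, ∞)`
attains its minimum at `ε* = 10 + (1/6)√(3600 + 120a)`, with minimal value
`3(√(30 + a) + √30)²`. -/
theorem contraction_min (a : ℝ) (ha : 0 ≤ a) :
    let εs : ℝ := 10 + (1 / 6) * Real.sqrt (3600 + 120 * a)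
    (10 < εs) ∧
    (∀ ε : ℝ, 10 < ε →
      3 * (3 * εs ^ 2 + a * εs) / (εs - 10) ≤ 3 * (3 * ε ^ 2 + a * ε) / (ε - 10)) ∧
    3 * (3 * εs ^ 2 + a * εs) / (εs - 10) = 3 * (Real.sqrt (30 + a) + Real.sqrt 30) ^ 2 := by
  intro εs
  have h1 : (0:ℝ) ≤ 900 + 30 * a := by linarith
  set u := Real.sqrt (900 + 30 * a) with hu
  have hu2 : u ^ 2 = 900 + 30 * a := Real.sq_sqrt h1
  have hu0 : 0 ≤ u := Real.sqrt_nonneg _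
  have hu30 : 30 ≤ u := by nlinarith [sq_nonneg (u - 30)]
  have hrt : Real.sqrt (3600 + 120 * a) = 2 * u := by
    rw [hu, show (3600 + 120 * a : ℝ) = 2 ^ 2 * (900 + 30 * a) by ring,
      Real.sqrt_mul (by norm_num), Real.sqrt_sq (by norm_num)]
  have hεs : εs = 10 + u / 3 := by
    show 10 + (1 / 6) * Real.sqrt (3600 + 120 * a) = 10 + u / 3
    rw [hrt]; ring
  have hεs10 : εs - 10 = u / 3 := by rw [hεs]; ring
  refine ⟨by rw [hεs]; linarith, ?_, ?_⟩
  · intro ε hε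
    rw [div_le_div_iff₀ (by rw [hεs10]; positivity) (by linarith)]
    rw [hεs]
    nlinarith [mul_nonneg hu0 (sq_nonneg (3 * (ε - 10) - u)), hu2, sq_nonneg (3 * (ε - 10) - u)]
  · have hmul : Real.sqrt (30 + a) * Real.sqrt 30 = u := by
      rw [← Real.sqrt_mul (by linarith), hu]
      congr 1
      ring
    have h30 : (Real.sqrt 30) ^ 2 = 30 := Real.sq_sqrt (by norm_num)
    have h30a : (Real.sqrt (30 + a)) ^ 2 = 30 + a := Real.sq_sqrt (by linarith)
    rw [hεs10, div_eq_iff (by positivity : u / 3 ≠ 0), hεs]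
    have : (Real.sqrt (30 + a) + Real.sqrt 30) ^ 2 = 60 + a + 2 * u := by
      nlinarith [hmul, h30, h30a]
    rw [this]
    linear_combination -hu2
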